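/- For every integer r and every non-negative integer n, Σ_{j=0}^{2n} (−1)^{j(r+1)} L_{2r(n−j)} = Σ_{j=0}^{n} (F_r/2)^{2j} 5^j L_{2r(n−j)} + Σ_{j=1}^{n} (F_r/2)^{2j−1} 5^j F_{r(2n−2j+1)}, and the common value of these expressions equals 2·L_{r(2n+1)}/L_r (note that L_r ≠ 0 for every integer r). -/

import Mathlib

open Finset

/-- Integer-indexed Fibonacci numbers: `fibZ n = F n`, with
`F (-n) = (-1)^(n+1) * F n`. -/
def fibZ (n : ℤ) : ℤ :=
  if 0 ≤ n then (Nat.fib n.toNat : ℤ) else (-1) ^ (n.natAbs + 1) * (Nat.fib n.natAbs : ℤ)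

/-- Integer-indexed Lucas numbers: `lucZ n = L n = F (n+1) + F (n-1)`. -/
def lucZ (n : ℤ) : ℤ := fibZ (n + 1) + fibZ (n - 1)

open goldenRatio Real

lemma binet_fib (n : ℤ) : (fibZ n : ℝ) * √5 = φ ^ n - ψ ^ n := by
  have h5 : (√5 : ℝ) ≠ 0 := by positivity
  rcases le_or_gt 0 n with h | h
  · lift n to ℕ using h
    rw [fibZ, if_pos (by positivity), Int.toNat_natCast, zpow_natCast, zpow_natCast]
    push_cast
    rw [Real.coe_fib_eq]
    field_simp
  · obtain ⟨m, rfl⟩ : ∃ m : ℕ, n = -(m:ℤ) := ⟨n.natAbs, by omega⟩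
    rw [fibZ, if_neg (by omega)]
    have hna : (-(m:ℤ)).natAbs = m := by simp
    rw [hna]
    have hfm : (Nat.fib m : ℝ) * √5 = φ ^ m - ψ ^ m := by
      rw [Real.coe_fib_eq]; field_simp
    have hmul : φ ^ m * ψ ^ m = (-1 : ℝ) ^ m := by
      rw [← mul_pow, goldenRatio_mul_goldenConj]
    have hinv1 : φ ^ (-(m:ℤ)) = (-1 : ℝ) ^ m * ψ ^ m := by
      rw [zpow_neg, zpow_natCast]
      refine inv_eq_of_mul_eq_one_left ?_
      calc (-1:ℝ) ^ m * ψ ^ m * φ ^ m = (-1:ℝ)^m * (φ ^ m * ψ ^ m) := by ring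
        _ = 1 := by rw [hmul, ← mul_pow]; norm_num
    have hinv2 : ψ ^ (-(m:ℤ)) = (-1 : ℝ) ^ m * φ ^ m := by
      rw [zpow_neg, zpow_natCast]
      refine inv_eq_of_mul_eq_one_left ?_
      calc (-1:ℝ) ^ m * φ ^ m * ψ ^ m = (-1:ℝ)^m * (φ ^ m * ψ ^ m) := by ring
        _ = 1 := by rw [hmul, ← mul_pow]; norm_num
    rw [hinv1, hinv2]
    push_cast
    rw [mul_assoc, hfm]
    ring

lemma binet_luc (n : ℤ) : (lucZ n : ℝ) = φ ^ n + ψ ^ n := by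
  have h5 : (√5 : ℝ) ≠ 0 := by positivity
  have key : (lucZ n : ℝ) * √5 = (φ ^ n + ψ ^ n) * √5 := by
    have h1 := binet_fib (n + 1)
    have h2 := binet_fib (n - 1)
    have e1 : φ ^ (n+1) = φ ^ n * φ := by rw [zpow_add₀ goldenRatio_ne_zero, zpow_one]
    have e2 : ψ ^ (n+1) = ψ ^ n * ψ := by rw [zpow_add₀ goldenConj_ne_zero, zpow_one]
    have e3 : φ ^ (n-1) = φ ^ n * φ⁻¹ := by rw [zpow_sub₀ goldenRatio_ne_zero, zpow_one, div_eq_mul_inv]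
    have e4 : ψ ^ (n-1) = ψ ^ n * ψ⁻¹ := by rw [zpow_sub₀ goldenConj_ne_zero, zpow_one, div_eq_mul_inv]
    have hluc : (lucZ n : ℝ) = (fibZ (n+1) : ℝ) + (fibZ (n-1) : ℝ) := by
      rw [lucZ]; push_cast; ring
    rw [hluc, add_mul, h1, h2, e1, e2, e3, e4, inv_goldenRatio, inv_goldenConj]
    have : (√5 : ℝ) = φ - ψ := goldenRatio_sub_goldenConj.symm
    rw [this]; ring
  exact mul_right_cancel₀ h5 key

lemma neg_one_zpow_eq (b : ℤ) : (-1 : ℝ) ^ b = φ ^ b * ψ ^ b := by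
  rw [← mul_zpow, goldenRatio_mul_goldenConj]

lemma gold_shift (a b : ℤ) : (-1:ℝ) ^ b * φ ^ (a - b) = ψ ^ b * φ ^ a := by
  have hab : φ ^ (a-b) * φ ^ b = φ ^ a := by
    rw [← zpow_add₀ goldenRatio_ne_zero]; congr 1; ring
  rw [neg_one_zpow_eq, ← hab]; ring

lemma goldConj_shift (a b : ℤ) : (-1:ℝ) ^ b * ψ ^ (a - b) = φ ^ b * ψ ^ a := by
  have hab : ψ ^ (a-b) * ψ ^ b = ψ ^ a := by
    rw [← zpow_add₀ goldenConj_ne_zero]; congr 1; ring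
  rw [neg_one_zpow_eq, ← hab]; ring

lemma luc_mulR (a b : ℤ) : (lucZ a : ℝ) * lucZ b = lucZ (a + b) + (-1:ℝ) ^ b * lucZ (a - b) := by
  rw [binet_luc, binet_luc, binet_luc, binet_luc,
    zpow_add₀ goldenRatio_ne_zero, zpow_add₀ goldenConj_ne_zero]
  linear_combination - gold_shift a b - goldConj_shift a b

lemma fib_lucR (a b : ℤ) :
    5 * (fibZ a : ℝ) * fibZ b = lucZ (a + b) - (-1:ℝ) ^ b * lucZ (a - b) := by
  have h5 : (√5 : ℝ) * √5 = 5 := Real.mul_self_sqrt (by norm_num)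
  have key : ((fibZ a : ℝ) * √5) * ((fibZ b : ℝ) * √5) = (φ ^ a - ψ ^ a) * (φ ^ b - ψ ^ b) := by
    rw [binet_fib, binet_fib]
  rw [binet_luc, binet_luc,
    zpow_add₀ goldenRatio_ne_zero, zpow_add₀ goldenConj_ne_zero]
  linear_combination key - (fibZ a : ℝ) * (fibZ b : ℝ) * h5 + gold_shift a b + goldConj_shift a b

lemma luc_negR (m : ℤ) : (lucZ (-m) : ℝ) = (-1:ℝ) ^ m * lucZ m := by
  have e1 : (-1:ℝ) ^ m * φ ^ (0 - m) = ψ ^ m * φ ^ (0:ℤ) := gold_shift 0 m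
  have e2 : (-1:ℝ) ^ m * ψ ^ (0 - m) = φ ^ m * ψ ^ (0:ℤ) := goldConj_shift 0 m
  rw [zero_sub] at e1 e2
  rw [zpow_zero, mul_one] at e1 e2
  have hs : (-1:ℝ) ^ m * (-1:ℝ) ^ m = 1 := by rw [← mul_zpow]; norm_num
  rw [binet_luc, binet_luc]
  linear_combination ((-1:ℝ)^m) * e1 + ((-1:ℝ)^m) * e2 - (φ^(-m) + ψ^(-m)) * hs

lemma luc_mulQ (a b : ℤ) :
    (lucZ a : ℚ) * lucZ b = lucZ (a + b) + (-1:ℚ) ^ b * lucZ (a - b) := by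
  have h := luc_mulR a b
  have : ((((lucZ a : ℚ) * lucZ b) : ℚ) : ℝ)
      = (((lucZ (a + b) + (-1:ℚ) ^ b * lucZ (a - b)) : ℚ) : ℝ) := by
    push_cast
    exact h
  exact_mod_cast this

lemma fib_lucQ (a b : ℤ) :
    5 * (fibZ a : ℚ) * fibZ b = lucZ (a + b) - (-1:ℚ) ^ b * lucZ (a - b) := by
  have h := fib_lucR a b
  have : ((5 * (fibZ a : ℚ) * fibZ b : ℚ) : ℝ)
      = (((lucZ (a + b) - (-1:ℚ) ^ b * lucZ (a - b)) : ℚ) : ℝ) := by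
    push_cast
    exact h
  exact_mod_cast this

lemma luc_negQ (m : ℤ) : (lucZ (-m) : ℚ) = (-1:ℚ) ^ m * lucZ m := by
  have h := luc_negR m
  have : (((lucZ (-m) : ℚ)) : ℝ) = (((-1:ℚ) ^ m * lucZ m : ℚ) : ℝ) := by
    push_cast
    exact h
  exact_mod_cast this

lemma luc_pos_of_nonneg (k : ℕ) : 0 < lucZ (k : ℤ) := by
  match k with
  | 0 => decide
  | (m+1) =>
    rw [lucZ]
    have h1 : fibZ ((m:ℤ) + 1 + 1) = (Nat.fib (m+2) : ℤ) := by
      rw [fibZ, if_pos (by positivity)]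
      have ht : ((m:ℤ) + 1 + 1).toNat = m + 2 := by omega
      rw [ht]
    have h2 : fibZ ((m:ℤ) + 1 - 1) = (Nat.fib m : ℤ) := by
      rw [fibZ, if_pos (by omega)]
      have ht : ((m:ℤ) + 1 - 1).toNat = m := by omega
      rw [ht]
    push_cast
    rw [h1, h2]
    have : 0 < Nat.fib (m+2) := Nat.fib_pos.mpr (by omega)
    positivity

lemma luc_ne_zeroQ (m : ℤ) : (lucZ m : ℚ) ≠ 0 := by
  rcases le_or_gt 0 m with h | h
  · lift m to ℕ using h
    have := luc_pos_of_nonneg m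
    positivity
  · obtain ⟨k, rfl⟩ : ∃ k : ℕ, m = -(k:ℤ) := ⟨m.natAbs, by omega⟩
    rw [luc_negQ]
    have h1 : 0 < lucZ (k : ℤ) := luc_pos_of_nonneg k
    have h2 : ((-1:ℚ) ^ (k:ℤ)) ≠ 0 := by
      apply zpow_ne_zero; norm_num
    have : (lucZ (k:ℤ) : ℚ) ≠ 0 := by exact_mod_cast h1.ne'
    exact mul_ne_zero h2 this

lemma eps_eq (r : ℤ) : (-1:ℚ) ^ (r+1) = -(-1:ℚ) ^ r := by
  rw [zpow_add₀ (by norm_num : (-1:ℚ) ≠ 0), zpow_one]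
  ring

lemma even_neg_one (k : ℤ) : (-1:ℚ) ^ (2*k) = 1 := by
  rw [zpow_mul]
  norm_num

lemma eps_sq (r : ℤ) : ((-1:ℚ) ^ (r+1)) ^ (2:ℕ) = 1 := by
  rw [← zpow_natCast ((-1:ℚ)^(r+1)) 2, ← zpow_mul]
  have h : (r+1) * ((2:ℕ):ℤ) = 2 * (r+1) := by push_cast; ring
  rw [h, even_neg_one]

lemma luc_zero : lucZ 0 = 2 := by decide

lemma partA (r : ℤ) : ∀ n : ℕ,
    (∑ j ∈ Finset.range (2*n+1),
      ((-1:ℚ)^(r+1))^j * (lucZ (2*r*((n:ℤ) - j)) : ℚ)) * (lucZ r : ℚ)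
    = 2 * (lucZ (r*(2*(n:ℤ)+1)) : ℚ) := by
  intro n
  induction n with
  | zero =>
    simp [luc_zero]
  | succ n ih =>
    set ε : ℚ := (-1:ℚ)^(r+1) with hεdef
    have hrec : (∑ j ∈ Finset.range (2*(n+1)+1),
        ε^j * (lucZ (2*r*(((n+1:ℕ):ℤ) - j)) : ℚ))
        = ε * (∑ j ∈ Finset.range (2*n+1), ε^j * (lucZ (2*r*((n:ℤ) - j)) : ℚ))
          + 2 * (lucZ (2*r*((n:ℤ)+1)) : ℚ) := by
      have h3 : 2*(n+1)+1 = (2*n+2)+1 := by ring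
      rw [h3, Finset.sum_range_succ', Finset.sum_range_succ]
      have hcong : ∀ j ∈ Finset.range (2*n+1),
          ε^(j+1) * (lucZ (2*r*(((n+1:ℕ):ℤ) - ((j+1:ℕ):ℤ))) : ℚ)
          = ε * (ε^j * (lucZ (2*r*((n:ℤ) - j)) : ℚ)) := by
        intro j hj
        have harg : 2*r*(((n+1:ℕ):ℤ) - ((j+1:ℕ):ℤ)) = 2*r*((n:ℤ) - j) := by
          push_cast; ring
        rw [harg, pow_succ]
        ring
      rw [Finset.sum_congr rfl hcong, ← Finset.mul_sum]
      -- last term: j = 2n+1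
      have harg2 : 2*r*(((n+1:ℕ):ℤ) - ((2*n+1+1:ℕ):ℤ)) = -(2*r*((n:ℤ)+1)) := by
        push_cast; ring
      have hpow : ε^(2*n+1+1) = 1 := by
        have h4 : 2*n+1+1 = 2*(n+1) := by ring
        rw [hεdef, h4, pow_mul, eps_sq r, one_pow]
      have hneg : (lucZ (-(2*r*((n:ℤ)+1))) : ℚ) = (lucZ (2*r*((n:ℤ)+1)) : ℚ) := by
        rw [luc_negQ]
        have h5 : 2*r*((n:ℤ)+1) = 2*(r*((n:ℤ)+1)) := by ring
        rw [h5, even_neg_one, one_mul]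
      have harg0 : 2*r*(((n+1:ℕ):ℤ) - ((0:ℕ):ℤ)) = 2*r*((n:ℤ)+1) := by
        push_cast; ring
      rw [harg2, hpow, hneg, harg0, pow_zero]
      ring
    -- now the algebraic step
    have h6 : r*(2*((n+1:ℕ):ℤ)+1) = r*(2*(n:ℤ)+3) := by push_cast; ring
    rw [hrec, h6]
    have h1 := luc_mulQ (2*r*((n:ℤ)+1)) r
    have e1 : 2*r*((n:ℤ)+1) + r = r*(2*(n:ℤ)+3) := by ring
    have e2 : 2*r*((n:ℤ)+1) - r = r*(2*(n:ℤ)+1) := by ring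
    rw [e1, e2] at h1
    have hε : ε = -(-1:ℚ)^r := eps_eq r
    linear_combination ε*ih + 2*h1 + (2*(lucZ (r*(2*(n:ℤ)+1)) : ℚ))*hε

lemma icc_sum (n : ℕ) (f : ℕ → ℚ) : ∑ j ∈ Finset.Icc 1 n, f j = ∑ j ∈ Finset.range n, f (j+1) := by
  rw [← Finset.Ico_add_one_right_eq_Icc, Finset.sum_Ico_eq_sum_range]
  simp [add_comm]

lemma partB (r : ℤ) : ∀ n : ℕ,
    ((∑ j ∈ Finset.range (n+1),
        ((fibZ r : ℚ)/2)^(2*j) * 5^j * (lucZ (2*r*((n:ℤ) - j)) : ℚ))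
      + ∑ j ∈ Finset.Icc 1 n,
        ((fibZ r : ℚ)/2)^(2*j-1) * 5^j * (fibZ (r*(2*(n:ℤ) - 2*j + 1)) : ℚ)) * (lucZ r : ℚ)
    = 2 * (lucZ (r*(2*(n:ℤ)+1)) : ℚ) := by
  intro n
  induction n with
  | zero =>
    simp [luc_zero]
  | succ n ih =>
    set t : ℚ := (fibZ r : ℚ)/2 with htdef
    have hrec1 : (∑ j ∈ Finset.range ((n+1)+1),
        t^(2*j) * 5^j * (lucZ (2*r*(((n+1:ℕ):ℤ) - j)) : ℚ))
        = 5*t^2 * (∑ j ∈ Finset.range (n+1), t^(2*j) * 5^j * (lucZ (2*r*((n:ℤ) - j)) : ℚ))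
          + (lucZ (2*r*((n:ℤ)+1)) : ℚ) := by
      rw [Finset.sum_range_succ']
      have hcong : ∀ j ∈ Finset.range (n+1),
          t^(2*(j+1)) * 5^(j+1) * (lucZ (2*r*(((n+1:ℕ):ℤ) - ((j+1:ℕ):ℤ))) : ℚ)
          = 5*t^2 * (t^(2*j) * 5^j * (lucZ (2*r*((n:ℤ) - j)) : ℚ)) := by
        intro j hj
        have harg : 2*r*(((n+1:ℕ):ℤ) - ((j+1:ℕ):ℤ)) = 2*r*((n:ℤ) - j) := by
          push_cast; ring
        have hp : 2*(j+1) = 2*j+2 := by ring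
        rw [harg, hp, pow_add, pow_succ]
        ring
      rw [Finset.sum_congr rfl hcong, ← Finset.mul_sum]
      have harg0 : 2*r*(((n+1:ℕ):ℤ) - ((0:ℕ):ℤ)) = 2*r*((n:ℤ)+1) := by
        push_cast; ring
      rw [harg0]
      norm_num
    have hrec2 : (∑ j ∈ Finset.Icc 1 (n+1),
        t^(2*j-1) * 5^j * (fibZ (r*(2*((n+1:ℕ):ℤ) - 2*j + 1)) : ℚ))
        = 5*t^2 * (∑ j ∈ Finset.Icc 1 n,
            t^(2*j-1) * 5^j * (fibZ (r*(2*(n:ℤ) - 2*j + 1)) : ℚ))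
          + 5*t*(fibZ (r*(2*(n:ℤ)+1)) : ℚ) := by
      rw [icc_sum (n+1) _, icc_sum n _, Finset.sum_range_succ']
      have hcong : ∀ j ∈ Finset.range n,
          t^(2*((j+1)+1)-1) * 5^((j+1)+1) * (fibZ (r*(2*((n+1:ℕ):ℤ) - 2*(((j+1)+1:ℕ):ℤ) + 1)) : ℚ)
          = 5*t^2 * (t^(2*(j+1)-1) * 5^(j+1) * (fibZ (r*(2*(n:ℤ) - 2*((j+1:ℕ):ℤ) + 1)) : ℚ)) := by
        intro j hj
        have harg : r*(2*((n+1:ℕ):ℤ) - 2*(((j+1)+1:ℕ):ℤ) + 1) = r*(2*(n:ℤ) - 2*((j+1:ℕ):ℤ) + 1) := by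
          push_cast; ring
        have hp1 : 2*((j+1)+1)-1 = (2*(j+1)-1)+2 := by omega
        rw [harg, hp1, pow_add, pow_succ]
        ring
      rw [Finset.sum_congr rfl hcong, ← Finset.mul_sum]
      have harg1 : r*(2*((n+1:ℕ):ℤ) - 2*(((0+1):ℕ):ℤ) + 1) = r*(2*(n:ℤ)+1) := by
        push_cast; ring
      rw [harg1]
      ring
    rw [hrec1, hrec2]
    have h6 : r*(2*((n+1:ℕ):ℤ)+1) = r*(2*(n:ℤ)+3) := by push_cast; ring
    rw [h6]
    -- identities
    have h1 := luc_mulQ (2*r*((n:ℤ)+1)) r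
    rw [show 2*r*((n:ℤ)+1) + r = r*(2*(n:ℤ)+3) by ring,
        show 2*r*((n:ℤ)+1) - r = r*(2*(n:ℤ)+1) by ring] at h1
    have h3 := luc_mulQ (r*(2*(n:ℤ)+1)) r
    rw [show r*(2*(n:ℤ)+1) + r = 2*r*((n:ℤ)+1) by ring,
        show r*(2*(n:ℤ)+1) - r = 2*r*(n:ℤ) by ring] at h3
    have h4 := fib_lucQ r (r*(2*(n:ℤ)+1))
    rw [show r + r*(2*(n:ℤ)+1) = 2*r*((n:ℤ)+1) by ring,
        show r - r*(2*(n:ℤ)+1) = -(2*r*(n:ℤ)) by ring] at h4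
    have hsgn : (-1:ℚ)^(r*(2*(n:ℤ)+1)) = (-1:ℚ)^r := by
      rw [show r*(2*(n:ℤ)+1) = r + 2*(r*(n:ℤ)) by ring,
        zpow_add₀ (by norm_num : (-1:ℚ) ≠ 0), even_neg_one, mul_one]
    have hneg : (lucZ (-(2*r*(n:ℤ))) : ℚ) = (lucZ (2*r*(n:ℤ)) : ℚ) := by
      rw [luc_negQ, show 2*r*(n:ℤ) = 2*(r*(n:ℤ)) by ring, even_neg_one, one_mul]
    rw [hsgn, hneg] at h4
    have h5 := fib_lucQ r r
    rw [show r + r = 2*r by ring, sub_self, luc_zero] at h5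
    have h6' := luc_mulQ r r
    rw [show r + r = 2*r by ring, sub_self, luc_zero] at h6'
    push_cast [luc_zero] at h5 h6'
    linear_combination (5*t^2)*ih + 2*h1 + ((lucZ r : ℚ)/2)*h3 + ((lucZ r : ℚ)/2)*h4
      + ((lucZ (r*(2*(n:ℤ)+1)) : ℚ)/2)*h5 - ((lucZ (r*(2*(n:ℤ)+1)) : ℚ)/2)*h6'

theorem thm2_lucas_odd_sum (r : ℤ) (n : ℕ) :
    (∑ j ∈ Finset.range (2 * n + 1),
        (-1 : ℚ) ^ ((j : ℤ) * (r + 1)) * (lucZ (2 * r * ((n : ℤ) - j)) : ℚ)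
      = (∑ j ∈ Finset.range (n + 1),
          ((fibZ r : ℚ) / 2) ^ (2 * j) * 5 ^ j * (lucZ (2 * r * ((n : ℤ) - j)) : ℚ))
        + ∑ j ∈ Finset.Icc 1 n,
          ((fibZ r : ℚ) / 2) ^ (2 * j - 1) * 5 ^ j
            * (fibZ (r * (2 * (n : ℤ) - 2 * j + 1)) : ℚ)) ∧
    (∑ j ∈ Finset.range (2 * n + 1),
        (-1 : ℚ) ^ ((j : ℤ) * (r + 1)) * (lucZ (2 * r * ((n : ℤ) - j)) : ℚ)
      = 2 * (lucZ (r * (2 * (n : ℤ) + 1)) : ℚ) / (lucZ r : ℚ)) := by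
  have hconv : ∀ j ∈ Finset.range (2*n+1),
      (-1 : ℚ) ^ ((j : ℤ) * (r + 1)) * (lucZ (2 * r * ((n : ℤ) - j)) : ℚ)
      = ((-1:ℚ)^(r+1))^j * (lucZ (2 * r * ((n : ℤ) - j)) : ℚ) := by
    intro j hj
    rw [mul_comm (j:ℤ) (r+1), zpow_mul, zpow_natCast]
  rw [Finset.sum_congr rfl hconv]
  have hA := partA r n
  have hB := partB r n
  have hLr := luc_ne_zeroQ r
  constructor
  · exact mul_right_cancel₀ hLr (hA.trans hB.symm)
  · rw [eq_div_iff hLr]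
    exact hA
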